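/- arXiv:2503.06379 — 2 statements merged into one kernel-verified Lean document; each statement's English description precedes it below -/
import Mathlib

section
/- Let G be a finite group that is not p-closed, for a prime p, and let p^d = min{ |P : P ∩ Q| : P, Q are distinct Sylow p-subgroups of G }. Then χ_p(G) = χ(C_p(G))/|G|_{p'} ≡ 1 (mod p^d). -/
open scoped Classical in
/-- The Euler characteristic of (the order complex of) a finite poset `P`:
`χ(P) = Σ_{i ≥ 0} (-1)^i c_i` where `c_i` is the number of chains in `P` with
exactly `i + 1` elements; a chain with `i + 1` elements contributes `(-1)^i = (-1)^(card+1)`. -/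
noncomputable def posetEulerChar (P : Type*) [PartialOrder P] [Finite P] : ℤ :=
  letI := Fintype.ofFinite P
  ∑ s ∈ (Finset.univ : Finset P).powerset,
    if s.Nonempty ∧ IsChain (· ≤ ·) (s : Set P) then (-1 : ℤ) ^ (s.card + 1) else 0

/-- `μ` is the Möbius function of the poset `P`: `μ(x,x) = 1` and
`Σ_{x ≤ z ≤ y} μ(x,z) = 0` for all `x < y`. -/
def IsMobiusOf {P : Type*} [PartialOrder P] (μ : P → P → ℤ) : Prop :=
  (∀ x, μ x x = 1) ∧ ∀ x y : P, x < y → (∑ᶠ z ∈ Set.Icc x y, μ x z) = 0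

/-- The coset poset `C_p(G)`: all right cosets `Hx` (as subsets of `G`, ordered by
inclusion) where `H` ranges over the `p`-subgroups of `G` (including the trivial one). -/
def pCosets (p : ℕ) (G : Type*) [Group G] : Set (Set G) :=
  {S | ∃ (H : Subgroup G) (x : G), IsPGroup p H ∧ S = (fun h => h * x) '' (H : Set G)}

/-! ### Auxiliary machinery for Brown's theorem on `χ(C_p(G))` -/

section BrownAux

open Finset MulAction
open scoped Classical

variable {G : Type*} [Group G]

/-- Right translation of a subset of a group. -/
def rtr (x : G) (S : Set G) : Set G := (fun g => g * x) '' S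

lemma mem_rtr {x a : G} {S : Set G} : a ∈ rtr x S ↔ a * x⁻¹ ∈ S := by
  constructor
  · rintro ⟨b, hb, rfl⟩; simpa
  · intro h; exact ⟨a * x⁻¹, h, by simp⟩

lemma rtr_rtr (x y : G) (S : Set G) : rtr x (rtr y S) = rtr (y * x) S := by
  ext a; simp [mem_rtr, mul_assoc]

lemma rtr_one (S : Set G) : rtr 1 S = S := by ext a; simp [mem_rtr]

lemma rtr_subset_rtr {x : G} {S T : Set G} : rtr x S ⊆ rtr x T ↔ S ⊆ T := by
  constructor
  · intro h a ha
    have h1 : a * x ∈ rtr x S := mem_rtr.2 (by simpa)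
    simpa using mem_rtr.1 (h h1)
  · intro h a ha; exact mem_rtr.2 (h (mem_rtr.1 ha))

lemma rtr_injective (x : G) : Function.Injective (rtr x) := fun S T h =>
  le_antisymm (rtr_subset_rtr.1 h.le) (rtr_subset_rtr.1 h.ge)

lemma rtr_inf (x : G) (S T : Set G) : rtr x (S ⊓ T) = rtr x S ⊓ rtr x T := by
  ext a; simp [mem_rtr, Set.mem_inter_iff]

lemma rtr_nonempty {x : G} {S : Set G} (h : S.Nonempty) : (rtr x S).Nonempty :=
  h.image _

lemma rtr_coe {H : Subgroup G} {k : G} (hk : k ∈ H) : rtr k (H : Set G) = (H : Set G) := by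
  ext a
  rw [mem_rtr]
  constructor
  · intro h; simpa using H.mul_mem h hk
  · intro h; exact H.mul_mem h (H.inv_mem hk)

lemma mem_pCosets {p : ℕ} {S : Set G} :
    S ∈ pCosets p G ↔ ∃ (H : Subgroup G) (x : G), IsPGroup p H ∧ S = rtr x (H : Set G) :=
  Iff.rfl

lemma pCosets_nonempty {p : ℕ} {S : Set G} (hS : S ∈ pCosets p G) : S.Nonempty := by
  obtain ⟨H, x, -, rfl⟩ := hS
  exact rtr_nonempty ⟨1, H.one_mem⟩

lemma rtr_mem_pCosets {p : ℕ} {S : Set G} (hS : S ∈ pCosets p G) (g : G) :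
    rtr g S ∈ pCosets p G := by
  obtain ⟨H, x, hH, rfl⟩ := hS
  exact ⟨H, x * g, hH, rtr_rtr g x _⟩

lemma normalize_coset {p : ℕ} {S : Set G} (hS : S ∈ pCosets p G) {y : G} (hy : y ∈ S) :
    ∃ H : Subgroup G, IsPGroup p H ∧ rtr y⁻¹ S = (H : Set G) := by
  obtain ⟨H, x, hH, rfl⟩ := hS
  obtain ⟨h, hh, rfl⟩ := hy
  refine ⟨H, hH, ?_⟩
  show rtr ((fun g => g * x) h)⁻¹ (rtr x (H : Set G)) = (H : Set G)
  rw [rtr_rtr]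
  have hx : x * ((fun g => g * x) h)⁻¹ = h⁻¹ := by show x * (h * x)⁻¹ = h⁻¹; group
  rw [hx]
  exact rtr_coe (H.inv_mem hh)

/-- The bottom element (minimum) of a finite chain of sets, as a `Finset.inf`. -/
noncomputable def cbot (t : Finset (Set G)) : Set G := t.inf id

lemma cbot_subset {t : Finset (Set G)} {S : Set G} (hS : S ∈ t) : cbot t ⊆ S :=
  Finset.inf_le hS

lemma cbot_mem {t : Finset (Set G)} (ht : t.Nonempty)
    (hc : IsChain (· ⊆ ·) (↑t : Set (Set G))) : cbot t ∈ t := by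
  induction ht using Finset.Nonempty.cons_induction with
  | singleton a => simp [cbot]
  | cons a s ha hs ih =>
    have hsub : (↑s : Set (Set G)) ⊆ ↑(Finset.cons a s ha) := by
      intro x hx; simp only [Finset.coe_cons, Set.mem_insert_iff]; exact Or.inr hx
    have hc' : IsChain (· ⊆ ·) (↑s : Set (Set G)) := hc.mono hsub
    have hmem := ih hc'
    have hcb : cbot (Finset.cons a s ha) = a ⊓ cbot s := by
      rw [cbot, Finset.inf_cons]; rfl
    rw [hcb]
    rcases eq_or_ne a (cbot s) with h | h
    · rw [← h, inf_idem]; exact Finset.mem_cons_self a s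
    · rcases hc (hsub (by exact_mod_cast hmem)) (by simp) h.symm with h' | h'
      · rw [inf_eq_right.2 h']; exact Finset.mem_cons.2 (Or.inr hmem)
      · rw [inf_eq_left.2 h']; exact Finset.mem_cons_self a s

lemma cbot_image_rtr {t : Finset (Set G)} (ht : t.Nonempty) (g : G) :
    cbot (t.image (rtr g)) = rtr g (cbot t) := by
  induction ht using Finset.Nonempty.cons_induction with
  | singleton a => simp [cbot]
  | cons a s ha hs ih =>
    have h1 : (Finset.cons a s ha).image (rtr g) = insert (rtr g a) (s.image (rtr g)) := by
      rw [Finset.cons_eq_insert, Finset.image_insert]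
    have h2 : cbot (insert (rtr g a) (s.image (rtr g))) =
        rtr g a ⊓ cbot (s.image (rtr g)) := by
      rw [cbot, Finset.inf_insert]; rfl
    have h3 : cbot (Finset.cons a s ha) = a ⊓ cbot s := by
      rw [cbot, Finset.inf_cons]; rfl
    rw [h1, h2, h3, rtr_inf, ih]

end BrownAux

section BrownMain

open Finset MulAction
open scoped Classical

variable {G : Type*} [Group G] [Fintype G] {p : ℕ}

/-- The finset of all (nonempty) chains in the coset poset `C_p(G)`,
as finsets of subsets of `G`. -/
noncomputable def CosetChains (p : ℕ) (G : Type*) [Group G] [Fintype G] :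
    Finset (Finset (Set G)) :=
  Finset.univ.filter fun s =>
    ↑s ⊆ pCosets p G ∧ s.Nonempty ∧ IsChain (· ⊆ ·) (↑s : Set (Set G))

/-- The finset of all (nonempty) chains of carriers of `p`-subgroups of `G`. -/
noncomputable def SubChains (p : ℕ) (G : Type*) [Group G] [Fintype G] :
    Finset (Finset (Set G)) :=
  Finset.univ.filter fun t =>
    t.Nonempty ∧ IsChain (· ⊆ ·) (↑t : Set (Set G)) ∧
      ∀ S ∈ t, ∃ H : Subgroup G, IsPGroup p H ∧ S = (H : Set G)

lemma mem_CosetChains {s : Finset (Set G)} :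
    s ∈ CosetChains p G ↔
      ↑s ⊆ pCosets p G ∧ s.Nonempty ∧ IsChain (· ⊆ ·) (↑s : Set (Set G)) := by
  simp [CosetChains]

lemma mem_SubChains {t : Finset (Set G)} :
    t ∈ SubChains p G ↔
      t.Nonempty ∧ IsChain (· ⊆ ·) (↑t : Set (Set G)) ∧
        ∀ S ∈ t, ∃ H : Subgroup G, IsPGroup p H ∧ S = (H : Set G) := by
  simp [SubChains]

/-- A choice of an element of a nonempty set. -/
noncomputable def pickg (S : Set G) : G := if h : S.Nonempty then h.choose else 1

lemma pickg_mem {S : Set G} (h : S.Nonempty) : pickg S ∈ S := by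
  rw [pickg, dif_pos h]; exact h.choose_spec

/-- Normalization of a chain of cosets: translate so that the bottom contains `1`. -/
noncomputable def nuc (s : Finset (Set G)) : Finset (Set G) :=
  s.image (rtr (pickg (cbot s))⁻¹)

/-- Translation of a chain. -/
noncomputable def trc (g : G) (t : Finset (Set G)) : Finset (Set G) := t.image (rtr g)

lemma subChains_bot_spec {t : Finset (Set G)} (ht : t ∈ SubChains p G) :
    ∃ H : Subgroup G, IsPGroup p H ∧ cbot t = (H : Set G) := by
  obtain ⟨hne, hchain, hmem⟩ := mem_SubChains.1 ht
  exact hmem _ (cbot_mem hne hchain)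

lemma subChains_rtr_fix {t : Finset (Set G)} (ht : t ∈ SubChains p G) {k : G}
    (hk : k ∈ cbot t) : trc k t = t := by
  obtain ⟨hne, hchain, hmem⟩ := mem_SubChains.1 ht
  have key : ∀ S ∈ t, rtr k S = S := by
    intro S hS
    obtain ⟨H, -, rfl⟩ := hmem S hS
    exact rtr_coe (cbot_subset hS hk)
  rw [trc, Finset.image_congr (fun S hS => key S hS), Finset.image_id']

lemma trc_mem_CosetChains {t : Finset (Set G)} (ht : t ∈ SubChains p G) (g : G) :
    trc g t ∈ CosetChains p G := by
  obtain ⟨hne, hchain, hmem⟩ := mem_SubChains.1 ht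
  rw [mem_CosetChains]
  refine ⟨?_, hne.image _, ?_⟩
  · intro S hS
    simp only [trc, Finset.coe_image] at hS
    obtain ⟨T, hT, rfl⟩ := hS
    obtain ⟨H, hH, rfl⟩ := hmem T hT
    exact ⟨H, g, hH, rfl⟩
  · intro A hA B hB hne'
    simp only [trc, Finset.coe_image] at hA hB
    obtain ⟨A', hA', rfl⟩ := hA
    obtain ⟨B', hB', rfl⟩ := hB
    have hne'' : A' ≠ B' := fun h => hne' (by rw [h])
    rcases hchain hA' hB' hne'' with h | h
    · exact Or.inl (rtr_subset_rtr.2 h)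
    · exact Or.inr (rtr_subset_rtr.2 h)

lemma cbot_trc {t : Finset (Set G)} (ht : t.Nonempty) (g : G) :
    cbot (trc g t) = rtr g (cbot t) := cbot_image_rtr ht g

lemma trc_trc (g g' : G) (t : Finset (Set G)) : trc g' (trc g t) = trc (g * g') t := by
  rw [trc, trc, trc, Finset.image_image]
  exact Finset.image_congr fun S _ => rtr_rtr g' g S

lemma nuc_trc {t : Finset (Set G)} (ht : t ∈ SubChains p G) (g : G) :
    nuc (trc g t) = t := by
  obtain ⟨hne, hchain, hmem⟩ := mem_SubChains.1 ht
  obtain ⟨H, hH, hbot⟩ := subChains_bot_spec ht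
  have hbne : (cbot (trc g t)).Nonempty := by
    rw [cbot_trc hne]
    exact rtr_nonempty (hbot ▸ ⟨1, H.one_mem⟩)
  set y := pickg (cbot (trc g t)) with hy
  have hymem : y ∈ rtr g (cbot t) := by rw [← cbot_trc hne]; exact pickg_mem hbne
  have hyg : y * g⁻¹ ∈ cbot t := mem_rtr.1 hymem
  have hk : g * y⁻¹ ∈ cbot t := by
    rw [hbot] at hyg ⊢
    have := H.inv_mem hyg
    simpa using this
  rw [nuc, ← hy, ← trc, trc_trc]
  exact subChains_rtr_fix ht hk

lemma nuc_spec {s : Finset (Set G)} (hs : s ∈ CosetChains p G) :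
    nuc s ∈ SubChains p G ∧ (nuc s).card = s.card ∧
      trc (pickg (cbot s)) (nuc s) = s := by
  obtain ⟨hsub, hne, hchain⟩ := mem_CosetChains.1 hs
  have hbmem : cbot s ∈ s := cbot_mem hne hchain
  have hbcoset : cbot s ∈ pCosets p G := hsub hbmem
  have hbne : (cbot s).Nonempty := pCosets_nonempty hbcoset
  set y := pickg (cbot s) with hy
  have hymem : y ∈ cbot s := pickg_mem hbne
  refine ⟨?_, ?_, ?_⟩
  · rw [mem_SubChains]
    refine ⟨hne.image _, ?_, ?_⟩
    · intro A hA B hB hne'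
      rw [nuc, Finset.coe_image] at hA hB
      obtain ⟨A', hA', rfl⟩ := hA
      obtain ⟨B', hB', rfl⟩ := hB
      have hne'' : A' ≠ B' := fun h => hne' (by rw [h])
      rcases hchain hA' hB' hne'' with h | h
      · exact Or.inl (rtr_subset_rtr.2 h)
      · exact Or.inr (rtr_subset_rtr.2 h)
    · intro S hS
      rw [nuc, Finset.mem_image] at hS
      obtain ⟨T, hT, rfl⟩ := hS
      obtain ⟨H, hH, hHT⟩ := normalize_coset (hsub hT) (cbot_subset hT hymem)
      exact ⟨H, hH, hHT.symm ▸ rfl⟩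
  · exact Finset.card_image_of_injective _ (rtr_injective _)
  · rw [nuc, ← trc, trc_trc]
    have : rtr (y⁻¹ * y) = rtr (1 : G) := by rw [inv_mul_cancel]
    rw [trc, this]
    have : ∀ S ∈ s, rtr (1 : G) S = S := fun S _ => rtr_one S
    rw [Finset.image_congr this, Finset.image_id']

lemma trc_eq_trc_iff {t : Finset (Set G)} (ht : t ∈ SubChains p G) {g g' : G} :
    trc g' t = trc g t ↔ g' * g⁻¹ ∈ cbot t := by
  obtain ⟨hne, hchain, hmem⟩ := mem_SubChains.1 ht
  obtain ⟨H, hH, hbot⟩ := subChains_bot_spec ht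
  constructor
  · intro h
    have hb : rtr g' (cbot t) = rtr g (cbot t) := by
      rw [← cbot_trc hne, ← cbot_trc hne, h]
    have h1 : g' ∈ rtr g' (cbot t) := mem_rtr.2 (by rw [hbot]; simpa using H.one_mem)
    rw [hb] at h1
    exact mem_rtr.1 h1
  · intro hk
    have : trc g (trc (g' * g⁻¹) t) = trc g' t := by
      rw [trc_trc]
      congr 1
      group
    rw [← this, subChains_rtr_fix ht hk]

lemma card_coset_filter (K : Set G) (g : G) :
    (Finset.univ.filter fun g' : G => g' * g⁻¹ ∈ K).card = K.ncard := by
  rw [Set.ncard_eq_toFinset_card']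
  refine Finset.card_bij (fun g' _ => g' * g⁻¹) ?_ ?_ ?_
  · intro a ha
    rw [Set.mem_toFinset]
    exact (Finset.mem_filter.1 ha).2
  · intro a _ b _ h
    exact mul_right_cancel h
  · intro k hk
    rw [Set.mem_toFinset] at hk
    exact ⟨k * g, Finset.mem_filter.2 ⟨Finset.mem_univ _, by simpa using hk⟩, by simp⟩

lemma fiber_eq_image {t : Finset (Set G)} (ht : t ∈ SubChains p G) :
    (CosetChains p G).filter (fun s => nuc s = t) =
      Finset.univ.image (fun g => trc g t) := by
  ext s
  simp only [Finset.mem_filter, Finset.mem_image, Finset.mem_univ, true_and]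
  constructor
  · rintro ⟨hs, hnu⟩
    exact ⟨pickg (cbot s), by rw [← hnu]; exact (nuc_spec hs).2.2⟩
  · rintro ⟨g, rfl⟩
    exact ⟨trc_mem_CosetChains ht g, nuc_trc ht g⟩

lemma fiber_card {t : Finset (Set G)} (ht : t ∈ SubChains p G) :
    ((CosetChains p G).filter fun s => nuc s = t).card * (cbot t).ncard =
      Fintype.card G := by
  rw [fiber_eq_image ht]
  have h := Finset.card_eq_sum_card_image (fun g => trc g t) (Finset.univ : Finset G)
  have key : ∀ b ∈ Finset.univ.image (fun g : G => trc g t),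
      (Finset.univ.filter fun g : G => trc g t = b).card = (cbot t).ncard := by
    intro b hb
    obtain ⟨g, -, rfl⟩ := Finset.mem_image.1 hb
    rw [← card_coset_filter (cbot t) g]
    congr 1
    ext g'
    simp only [Finset.mem_filter, Finset.mem_univ, true_and]
    exact trc_eq_trc_iff ht
  rw [Finset.sum_congr rfl key, Finset.sum_const, smul_eq_mul] at h
  rw [← h, Finset.card_univ]

/-- The `p`-adic valuation of the bottom subgroup of a chain. -/
noncomputable def vchain (p : ℕ) (t : Finset (Set G)) : ℕ :=
  ((cbot t).ncard).factorization p

/-- `χ_p(G)`, defined combinatorially. -/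
noncomputable def chiP (p : ℕ) (G : Type*) [Group G] [Fintype G] : ℤ :=
  ∑ t ∈ SubChains p G,
    (-1 : ℤ) ^ (t.card + 1) *
      (p : ℤ) ^ ((Fintype.card G).factorization p - vchain p t)

lemma cbot_ncard_spec (hp : p.Prime) {t : Finset (Set G)} (ht : t ∈ SubChains p G) :
    (cbot t).ncard = p ^ vchain p t ∧ vchain p t ≤ (Fintype.card G).factorization p := by
  haveI : Fact p.Prime := ⟨hp⟩
  obtain ⟨H, hH, hbot⟩ := subChains_bot_spec ht
  obtain ⟨n, hn⟩ := IsPGroup.iff_card.mp hH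
  have hK : (cbot t).ncard = p ^ n := by
    rw [hbot, ← Nat.card_coe_set_eq, SetLike.coe_sort_coe, hn]
  have hv : vchain p t = n := by
    rw [vchain, hK, hp.factorization_pow, Finsupp.single_eq_same]
  refine ⟨by rw [hK, hv], ?_⟩
  rw [hv]
  have hdvd : p ^ n ∣ Fintype.card G := by
    rw [← hn, ← Nat.card_eq_fintype_card]
    exact Subgroup.card_subgroup_dvd_card H
  exact (Nat.Prime.pow_dvd_iff_le_factorization hp Fintype.card_ne_zero).1 hdvd

lemma fiber_card' (hp : p.Prime) {t : Finset (Set G)} (ht : t ∈ SubChains p G) :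
    ((CosetChains p G).filter fun s => nuc s = t).card =
      ordCompl[p] (Fintype.card G) *
        p ^ ((Fintype.card G).factorization p - vchain p t) := by
  obtain ⟨hK, hv⟩ := cbot_ncard_spec hp ht
  have h1 := fiber_card ht
  rw [hK] at h1
  have h2 : ordCompl[p] (Fintype.card G) *
      p ^ ((Fintype.card G).factorization p - vchain p t) * p ^ vchain p t =
      Fintype.card G := by
    rw [mul_assoc, ← pow_add, Nat.sub_add_cancel hv, mul_comm]
    exact Nat.ordProj_mul_ordCompl_eq_self _ _
  exact Nat.eq_of_mul_eq_mul_right (pow_pos hp.pos _) (h1.trans h2.symm)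

lemma sum_cosetChains (hp : p.Prime) :
    ∑ s ∈ CosetChains p G, (-1 : ℤ) ^ (s.card + 1) =
      ((ordCompl[p] (Fintype.card G) : ℕ) : ℤ) * chiP p G := by
  rw [← Finset.sum_fiberwise_of_maps_to (g := nuc)
    (fun s hs => (nuc_spec hs).1) (fun s => (-1 : ℤ) ^ (s.card + 1))]
  rw [chiP, Finset.mul_sum]
  refine Finset.sum_congr rfl fun t ht => ?_
  have hcard : ∀ s ∈ (CosetChains p G).filter (fun s => nuc s = t),
      s.card = t.card := by
    intro s hs
    obtain ⟨hs1, hs2⟩ := Finset.mem_filter.1 hs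
    rw [← hs2]
    exact ((nuc_spec hs1).2.1).symm
  rw [Finset.sum_congr rfl fun s hs => by rw [hcard s hs]]
  rw [Finset.sum_const, fiber_card' hp ht, nsmul_eq_mul, Nat.cast_mul, Nat.cast_pow]
  ring

end BrownMain

section BrownTransfer

open Finset
open scoped Classical

variable {G : Type*} [Group G] [Fintype G] {p : ℕ}

lemma posetEulerChar_eq_sum_cosetChains :
    posetEulerChar ↥(pCosets p G) =
      ∑ s ∈ CosetChains p G, (-1 : ℤ) ^ (s.card + 1) := by
  rw [posetEulerChar]
  have step1 : ∑ s ∈ CosetChains p G, (-1 : ℤ) ^ (s.card + 1) =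
      ∑ t ∈ (Finset.univ : Finset (Finset (Set G))).filter
        (fun t => ↑t ⊆ pCosets p G),
        (if t.Nonempty ∧ IsChain (· ⊆ ·) (↑t : Set (Set G))
          then (-1 : ℤ) ^ (t.card + 1) else 0) := by
    rw [CosetChains]
    rw [Finset.sum_filter, Finset.sum_filter]
    refine Finset.sum_congr rfl fun t _ => ?_
    by_cases h1 : ↑t ⊆ pCosets p G <;>
      by_cases h2 : t.Nonempty ∧ IsChain (· ⊆ ·) (↑t : Set (Set G)) <;>
      simp [h1, h2]
  rw [step1]
  letI I : Fintype ↥(pCosets p G) := Fintype.ofFinite _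
  refine Finset.sum_nbij'
    (i := fun s => s.map (Function.Embedding.subtype (· ∈ pCosets p G)))
    (j := fun t => t.subtype (· ∈ pCosets p G)) ?_ ?_ ?_ ?_ ?_
  · intro s _
    refine Finset.mem_filter.2 ⟨Finset.mem_univ _, ?_⟩
    intro S hS
    rw [Finset.coe_map] at hS
    obtain ⟨⟨S', hS'⟩, -, rfl⟩ := hS
    exact hS'
  · intro t _
    exact Finset.mem_powerset.2 (Finset.subset_univ _)
  · intro s _
    ext ⟨x, hx⟩
    simp only [Finset.mem_subtype, Finset.mem_map, Function.Embedding.coe_subtype]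
    exact ⟨fun ⟨⟨y, hy⟩, hys, hyx⟩ => by subst hyx; exact hys, fun h => ⟨⟨x, hx⟩, h, rfl⟩⟩
  · intro t ht
    have hsub := (Finset.mem_filter.1 ht).2
    show (t.subtype (· ∈ pCosets p G)).map (Function.Embedding.subtype (· ∈ pCosets p G)) = t
    rw [Finset.subtype_map]
    exact Finset.filter_true_of_mem fun S hS => hsub hS
  · intro s _
    have hcard : (s.map (Function.Embedding.subtype (· ∈ pCosets p G))).card
        = s.card := Finset.card_map _
    have hne : (s.map (Function.Embedding.subtype (· ∈ pCosets p G))).Nonempty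
        ↔ s.Nonempty := Finset.map_nonempty
    have hchain : IsChain (· ≤ ·) (↑s : Set ↥(pCosets p G)) ↔
        IsChain (· ⊆ ·)
          (↑(s.map (Function.Embedding.subtype (· ∈ pCosets p G))) : Set (Set G)) := by
      rw [Finset.coe_map]
      constructor
      · intro hc
        exact IsChain.image_of_map_rel _ _ (⇑(Function.Embedding.subtype (· ∈ pCosets p G)))
          (fun x y hxy => hxy) hc
      · intro hc a ha b hb hne'
        have hne'' : (Function.Embedding.subtype (· ∈ pCosets p G)) a ≠
            (Function.Embedding.subtype (· ∈ pCosets p G)) b := by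
          intro h
          exact hne' (Subtype.coe_injective h)
        rcases hc (Set.mem_image_of_mem _ ha) (Set.mem_image_of_mem _ hb) hne'' with h | h
        · exact Or.inl h
        · exact Or.inr h
    rw [if_congr (and_congr hne.symm hchain) rfl rfl, hcard]

end BrownTransfer

section BrownSylow

open Finset MulAction
open scoped Classical

variable {G : Type*} [Group G] [Fintype G] {p d : ℕ}

/-- A choice of Sylow `p`-subgroup containing the bottom of a chain. -/
noncomputable def SPs (p : ℕ) [Fact p.Prime] (t : Finset (Set G)) : Sylow p G :=
  if h : ∃ Q : Sylow p G, cbot t ⊆ ((Q : Subgroup G) : Set G) then h.choose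
  else Classical.arbitrary _

lemma SPs_spec [Fact p.Prime] {t : Finset (Set G)} (ht : t ∈ SubChains p G) :
    cbot t ⊆ ((SPs p t : Subgroup G) : Set G) := by
  obtain ⟨H, hH, hbot⟩ := subChains_bot_spec ht
  obtain ⟨Q, hQ⟩ := hH.exists_le_sylow
  have hex : ∃ Q : Sylow p G, cbot t ⊆ ((Q : Subgroup G) : Set G) :=
    ⟨Q, by rw [hbot]; exact SetLike.coe_subset_coe.2 hQ⟩
  rw [SPs, dif_pos hex]
  exact hex.choose_spec

lemma relIndex_bot_eq [Fact p.Prime] (hp : p.Prime) {t : Finset (Set G)}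
    (ht : t ∈ SubChains p G) {Q : Sylow p G} {H : Subgroup G}
    (hbot : cbot t = (H : Set G)) (hle : H ≤ (Q : Subgroup G)) :
    H.relIndex (Q : Subgroup G) =
      p ^ ((Fintype.card G).factorization p - vchain p t) := by
  have hcardH : Nat.card H = p ^ vchain p t := by
    have h1 : (cbot t).ncard = p ^ vchain p t := (cbot_ncard_spec hp ht).1
    rw [hbot, ← Nat.card_coe_set_eq, SetLike.coe_sort_coe] at h1
    exact h1
  have hcardQ : Nat.card (Q : Subgroup G) = p ^ (Fintype.card G).factorization p := by
    rw [Q.card_eq_multiplicity, Nat.card_eq_fintype_card]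
  have hmul : Nat.card (H.subgroupOf (Q : Subgroup G)) *
      (H.subgroupOf (Q : Subgroup G)).index = Nat.card (Q : Subgroup G) :=
    Subgroup.card_mul_index _
  have hcsub : Nat.card (H.subgroupOf (Q : Subgroup G)) = Nat.card H :=
    Nat.card_congr (Subgroup.subgroupOfEquivOfLe hle).toEquiv
  rw [hcsub, hcardH, hcardQ] at hmul
  have hrel : H.relIndex (Q : Subgroup G) = (H.subgroupOf (Q : Subgroup G)).index := rfl
  have hv : vchain p t ≤ (Fintype.card G).factorization p := (cbot_ncard_spec hp ht).2
  have hmul2 : p ^ vchain p t *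
      p ^ ((Fintype.card G).factorization p - vchain p t) =
      p ^ (Fintype.card G).factorization p := by
    rw [← pow_add, Nat.add_sub_cancel' hv]
  rw [hrel]
  exact Nat.eq_of_mul_eq_mul_left (pow_pos hp.pos _) (hmul.trans hmul2.symm)

lemma sylow_unique_of_large [Fact p.Prime] (hp : p.Prime)
    (hmin : ∀ P Q : Sylow p G, P ≠ Q →
      p ^ d ≤ ((P : Subgroup G) ⊓ (Q : Subgroup G)).relIndex (P : Subgroup G))
    {t : Finset (Set G)} (ht : t ∈ SubChains p G)
    (hlarge : (Fintype.card G).factorization p - vchain p t < d)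
    {Q : Sylow p G} (hQ : cbot t ⊆ ((Q : Subgroup G) : Set G)) : Q = SPs p t := by
  by_contra hne
  obtain ⟨H, hH, hbot⟩ := subChains_bot_spec ht
  have hHQ : H ≤ (Q : Subgroup G) := by
    rw [← SetLike.coe_subset_coe]; rw [← hbot]; exact hQ
  have hHR : H ≤ (SPs p t : Subgroup G) := by
    rw [← SetLike.coe_subset_coe]; rw [← hbot]; exact SPs_spec ht
  have h1 : ((Q : Subgroup G) ⊓ (SPs p t : Subgroup G)).relIndex (Q : Subgroup G) ∣
      H.relIndex (Q : Subgroup G) :=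
    Subgroup.relIndex_dvd_of_le_left _ (le_inf hHQ hHR)
  rw [relIndex_bot_eq hp ht hbot hHQ] at h1
  have h2 := hmin Q (SPs p t) hne
  have h3 := Nat.le_of_dvd (pow_pos hp.pos _) h1
  have h4 : (p : ℕ) ^ ((Fintype.card G).factorization p - vchain p t) < p ^ d :=
    Nat.pow_lt_pow_right hp.one_lt hlarge
  omega

lemma subset_SPs_of_large [Fact p.Prime] (hp : p.Prime)
    (hmin : ∀ P Q : Sylow p G, P ≠ Q →
      p ^ d ≤ ((P : Subgroup G) ⊓ (Q : Subgroup G)).relIndex (P : Subgroup G))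
    {t : Finset (Set G)} (ht : t ∈ SubChains p G)
    (hlarge : (Fintype.card G).factorization p - vchain p t < d) :
    ∀ S ∈ t, S ⊆ ((SPs p t : Subgroup G) : Set G) := by
  intro S hS
  obtain ⟨hne, hchain, hmem⟩ := mem_SubChains.1 ht
  obtain ⟨H', hH', rfl⟩ := hmem S hS
  obtain ⟨Q, hQ⟩ := hH'.exists_le_sylow
  have hc : cbot t ⊆ ((Q : Subgroup G) : Set G) :=
    (cbot_subset hS).trans (SetLike.coe_subset_coe.2 hQ)
  have he := sylow_unique_of_large hp hmin ht hlarge hc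
  exact SetLike.coe_subset_coe.2 (he ▸ hQ)

lemma eq_singleton_of_cbot_eq [Fact p.Prime] (hp : p.Prime)
    (hmin : ∀ P Q : Sylow p G, P ≠ Q →
      p ^ d ≤ ((P : Subgroup G) ⊓ (Q : Subgroup G)).relIndex (P : Subgroup G))
    {t : Finset (Set G)} (ht : t ∈ SubChains p G)
    (hlarge : (Fintype.card G).factorization p - vchain p t < d)
    (hbot' : cbot t = ((SPs p t : Subgroup G) : Set G)) :
    t = {((SPs p t : Subgroup G) : Set G)} := by
  obtain ⟨hne, hchain, hmem⟩ := mem_SubChains.1 ht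
  refine Finset.eq_singleton_iff_unique_mem.2 ⟨hbot' ▸ cbot_mem hne hchain, fun S hS => ?_⟩
  refine subset_antisymm (subset_SPs_of_large hp hmin ht hlarge S hS) ?_
  rw [← hbot']
  exact cbot_subset hS

lemma card_modEq_card_fixedPoints_of_dvd {K : Type*} [Group K] {α : Type*} [Fintype α]
    [MulAction K α] {N : ℕ}
    (h : ∀ x : α, x ∉ fixedPoints K α → N ∣ Fintype.card (orbit K x)) :
    Fintype.card α ≡ Fintype.card (fixedPoints K α) [MOD N] := by
  classical
  calc Fintype.card α
      = Fintype.card (Σ y : Quotient (orbitRel K α), {x // Quotient.mk'' x = y}) :=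
        Fintype.card_congr (Equiv.sigmaFiberEquiv _).symm
    _ = ∑ a : Quotient (orbitRel K α), Fintype.card {x // Quotient.mk'' x = a} :=
        Fintype.card_sigma
    _ ≡ ∑ _a : fixedPoints K α, 1 [MOD N] := ?_
    _ = _ := by simp
  rw [← ZMod.natCast_eq_natCast_iff _ _ N, Nat.cast_sum, Nat.cast_sum]
  have key : ∀ x : α,
      Fintype.card {y // (Quotient.mk'' y : Quotient (orbitRel K α)) = Quotient.mk'' x} =
        Fintype.card (orbit K x) := fun x => by simp only [Quotient.eq'']; congr
  refine Eq.symm (Finset.sum_bij_ne_zero (fun a _ _ => Quotient.mk'' a.1)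
    (fun _ _ _ => Finset.mem_univ _)
    (fun a₁ _ _ a₂ _ _ h' => Subtype.eq (mem_fixedPoints'.mp a₂.2 a₁.1 (Quotient.exact' h')))
    (fun b => Quotient.inductionOn' b fun b _ hb => ?_) fun a _ _ => by
      rw [key, mem_fixedPoints_iff_card_orbit_eq_one.mp a.2, Nat.cast_one])
  have hfixb : b ∈ fixedPoints K α := by
    by_contra hbf
    apply hb
    rw [key]
    exact (ZMod.natCast_eq_zero_iff _ _).mpr (h b hbf)
  rw [key, mem_fixedPoints_iff_card_orbit_eq_one.mp hfixb] at hb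
  exact ⟨⟨b, hfixb⟩, Finset.mem_univ _, by simpa using hb, rfl⟩

lemma card_sylow_modEq_one_pow (hp : p.Prime)
    (hmin : ∀ P Q : Sylow p G, P ≠ Q →
      p ^ d ≤ ((P : Subgroup G) ⊓ (Q : Subgroup G)).relIndex (P : Subgroup G)) :
    Fintype.card (Sylow p G) ≡ 1 [MOD p ^ d] := by
  haveI : Fact p.Prime := ⟨hp⟩
  obtain ⟨P₀⟩ : Nonempty (Sylow p G) := inferInstance
  have sylow_le_eq : ∀ {P Q : Sylow p G}, (P : Subgroup G) ≤ (Q : Subgroup G) → P = Q := by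
    intro P Q hle
    refine Sylow.ext (Subgroup.eq_of_le_of_card_ge hle (le_of_eq ?_))
    rw [Q.card_eq_multiplicity, P.card_eq_multiplicity]
  have hfix : fixedPoints ↥(P₀ : Subgroup G) (Sylow p G) = {P₀} := by
    ext Q
    rw [Set.mem_singleton_iff, P₀.isPGroup'.sylow_mem_fixedPoints_iff]
    constructor
    · intro h' ; exact (sylow_le_eq h').symm
    · rintro rfl; exact le_rfl
  have hcard1 : Fintype.card (fixedPoints ↥(P₀ : Subgroup G) (Sylow p G)) = 1 := by
    simp [hfix]
  have hdvd : ∀ Q : Sylow p G, Q ∉ fixedPoints ↥(P₀ : Subgroup G) (Sylow p G) →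
      p ^ d ∣ Fintype.card (orbit ↥(P₀ : Subgroup G) Q) := by
    intro Q hQ
    have hne : P₀ ≠ Q := by
      rintro rfl
      exact hQ (by rw [hfix]; rfl)
    have horb : Fintype.card (orbit ↥(P₀ : Subgroup G) Q) =
        (stabilizer ↥(P₀ : Subgroup G) Q).index := by
      rw [MulAction.index_stabilizer, ← Nat.card_coe_set_eq, Nat.card_eq_fintype_card]
    have hstab : stabilizer ↥(P₀ : Subgroup G) Q =
        ((Subgroup.normalizer (Q : Set G)).subgroupOf (P₀ : Subgroup G)) := by
      ext g
      rw [mem_stabilizer_iff, Subgroup.mem_subgroupOf, ← Sylow.smul_eq_iff_mem_normalizer]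
      rfl
    have hsub : ((P₀ : Subgroup G) ⊓ (Q : Subgroup G)).subgroupOf (P₀ : Subgroup G) =
        (Subgroup.normalizer (Q : Set G)).subgroupOf (P₀ : Subgroup G) := by
      rw [← P₀.isPGroup'.inf_normalizer_sylow Q, Subgroup.inf_subgroupOf_left]
    have hindex : (stabilizer ↥(P₀ : Subgroup G) Q).index =
        ((P₀ : Subgroup G) ⊓ (Q : Subgroup G)).relIndex (P₀ : Subgroup G) := by
      rw [hstab, Subgroup.relIndex, hsub]
    have hge : p ^ d ≤ ((P₀ : Subgroup G) ⊓ (Q : Subgroup G)).relIndex (P₀ : Subgroup G) :=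
      hmin P₀ Q hne
    have hdvd' : ((P₀ : Subgroup G) ⊓ (Q : Subgroup G)).relIndex (P₀ : Subgroup G) ∣
        p ^ (Fintype.card G).factorization p := by
      rw [Subgroup.relIndex]
      have h1 : Nat.card (((P₀ : Subgroup G) ⊓ (Q : Subgroup G)).subgroupOf
          (P₀ : Subgroup G)) *
          (((P₀ : Subgroup G) ⊓ (Q : Subgroup G)).subgroupOf (P₀ : Subgroup G)).index =
          Nat.card (P₀ : Subgroup G) := Subgroup.card_mul_index _
      rw [P₀.card_eq_multiplicity] at h1
      simp only [Nat.card_eq_fintype_card] at h1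
      exact Dvd.intro_left _ h1
    obtain ⟨e, _, he⟩ := (Nat.dvd_prime_pow hp).1 hdvd'
    rw [horb, hindex, he]
    rw [he] at hge
    exact pow_dvd_pow p ((Nat.pow_le_pow_iff_right hp.one_lt).1 hge)
  have := card_modEq_card_fixedPoints_of_dvd hdvd
  rwa [hcard1] at this

end BrownSylow

section BrownInvolution

open Finset MulAction
open scoped Classical

variable {G : Type*} [Group G] [Fintype G] {p d : ℕ}

/-- The involution toggling the (unique) Sylow subgroup above the bottom of a chain. -/
noncomputable def sigmaT (p : ℕ) [Fact p.Prime] (t : Finset (Set G)) : Finset (Set G) :=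
  if ((SPs p t : Subgroup G) : Set G) ∈ t then t.erase ((SPs p t : Subgroup G) : Set G)
  else insert ((SPs p t : Subgroup G) : Set G) t

lemma sigmaT_props [Fact p.Prime] (hp : p.Prime)
    (hmin : ∀ P Q : Sylow p G, P ≠ Q →
      p ^ d ≤ ((P : Subgroup G) ⊓ (Q : Subgroup G)).relIndex (P : Subgroup G))
    {t : Finset (Set G)} (htS : t ∈ SubChains p G)
    (hlt : (Fintype.card G).factorization p - vchain p t < d)
    (hnot : ¬ ∃ Q : Sylow p G, t = {((Q : Subgroup G) : Set G)}) :
    sigmaT p t ∈ SubChains p G ∧ cbot (sigmaT p t) = cbot t ∧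
      (¬ ∃ Q : Sylow p G, sigmaT p t = {((Q : Subgroup G) : Set G)}) ∧
      sigmaT p t ≠ t ∧ SPs p (sigmaT p t) = SPs p t ∧
      ((((SPs p t : Subgroup G) : Set G) ∈ t ∧ t.card = (sigmaT p t).card + 1) ∨
        ((((SPs p t : Subgroup G) : Set G) ∉ t) ∧ (sigmaT p t).card = t.card + 1)) := by
  obtain ⟨hne, hchain, hmem⟩ := mem_SubChains.1 htS
  set A := ((SPs p t : Subgroup G) : Set G) with hA
  have hbmem : cbot t ∈ t := cbot_mem hne hchain
  have hAbot : cbot t ⊆ A := SPs_spec htS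
  have hAne : cbot t ≠ A := by
    intro h
    exact hnot ⟨SPs p t, eq_singleton_of_cbot_eq hp hmin htS hlt h⟩
  have notsing : ∀ u : Finset (Set G), u ∈ SubChains p G →
      cbot u = cbot t → ¬ ∃ Q : Sylow p G, u = {((Q : Subgroup G) : Set G)} := by
    rintro u huS hub ⟨Q, rfl⟩
    have hbQ : cbot ({((Q : Subgroup G) : Set G)} : Finset (Set G)) =
        ((Q : Subgroup G) : Set G) := by
      rw [cbot, Finset.inf_singleton]; rfl
    rw [hbQ] at hub
    have hle : cbot t ⊆ ((Q : Subgroup G) : Set G) := by rw [← hub]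
    have := sylow_unique_of_large hp hmin htS hlt hle
    apply hAne
    rw [← hub, this]
  by_cases hAt : A ∈ t
  · have hσ : sigmaT p t = t.erase A := by rw [sigmaT, if_pos hAt]
    have hbm' : cbot t ∈ t.erase A := Finset.mem_erase.2 ⟨hAne, hbmem⟩
    have hSσ : t.erase A ∈ SubChains p G := by
      refine mem_SubChains.2 ⟨⟨_, hbm'⟩, ?_, fun S hS => hmem S (Finset.mem_of_mem_erase hS)⟩
      exact hchain.mono (Finset.coe_subset.2 (Finset.erase_subset A t))
    have hbotσ : cbot (t.erase A) = cbot t :=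
      le_antisymm (Finset.inf_le hbm') (Finset.inf_mono (Finset.erase_subset A t))
    rw [hσ]
    refine ⟨hSσ, hbotσ, notsing _ hSσ hbotσ, ?_, ?_, Or.inl ⟨hAt, (Finset.card_erase_add_one hAt).symm⟩⟩
    · intro h
      exact Finset.notMem_erase A t (h.symm ▸ hAt)
    · have hlt' : (Fintype.card G).factorization p - vchain p (t.erase A) < d := by
        rw [vchain, hbotσ]; exact hlt
      exact (sylow_unique_of_large hp hmin hSσ hlt' (by rw [hbotσ]; exact hAbot)).symm
  · have hσ : sigmaT p t = insert A t := by rw [sigmaT, if_neg hAt]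
    have hsubSP := subset_SPs_of_large hp hmin htS hlt
    have hSσ : insert A t ∈ SubChains p G := by
      refine mem_SubChains.2 ⟨Finset.insert_nonempty _ _, ?_, ?_⟩
      · rw [Finset.coe_insert]
        exact hchain.insert fun S hS _ => Or.inr (hsubSP S hS)
      · intro S hS
        rcases Finset.mem_insert.1 hS with rfl | hS'
        · exact ⟨(SPs p t : Subgroup G), (SPs p t).isPGroup', rfl⟩
        · exact hmem S hS'
    have hbotσ : cbot (insert A t) = cbot t := by
      have h1 : cbot (insert A t) = A ⊓ cbot t := by rw [cbot, Finset.inf_insert]; rfl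
      rw [h1]
      exact inf_eq_right.2 hAbot
    rw [hσ]
    refine ⟨hSσ, hbotσ, notsing _ hSσ hbotσ, ?_, ?_, Or.inr ⟨hAt, Finset.card_insert_of_notMem hAt⟩⟩
    · intro h
      exact hAt (h ▸ Finset.mem_insert_self A t)
    · have hlt' : (Fintype.card G).factorization p - vchain p (insert A t) < d := by
        rw [vchain, hbotσ]; exact hlt
      exact (sylow_unique_of_large hp hmin hSσ hlt' (by rw [hbotσ]; exact hAbot)).symm

lemma sigmaT_sigmaT [Fact p.Prime] (hp : p.Prime)
    (hmin : ∀ P Q : Sylow p G, P ≠ Q →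
      p ^ d ≤ ((P : Subgroup G) ⊓ (Q : Subgroup G)).relIndex (P : Subgroup G))
    {t : Finset (Set G)} (htS : t ∈ SubChains p G)
    (hlt : (Fintype.card G).factorization p - vchain p t < d)
    (hnot : ¬ ∃ Q : Sylow p G, t = {((Q : Subgroup G) : Set G)}) :
    sigmaT p (sigmaT p t) = t := by
  obtain ⟨hS1, hbot1, hnot1, hne1, hSP1, hcard1⟩ := sigmaT_props hp hmin htS hlt hnot
  rcases hcard1 with ⟨hAt, -⟩ | ⟨hAt, -⟩
  · have hσ : sigmaT p t = t.erase ((SPs p t : Subgroup G) : Set G) := by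
      rw [sigmaT, if_pos hAt]
    have hnm : ((SPs p (sigmaT p t) : Subgroup G) : Set G) ∉ sigmaT p t := by
      rw [hSP1, hσ]; exact Finset.notMem_erase _ _
    rw [sigmaT, if_neg hnm, hSP1, hσ, Finset.insert_erase hAt]
  · have hσ : sigmaT p t = insert ((SPs p t : Subgroup G) : Set G) t := by
      rw [sigmaT, if_neg hAt]
    have hnm : ((SPs p (sigmaT p t) : Subgroup G) : Set G) ∈ sigmaT p t := by
      rw [hSP1, hσ]; exact Finset.mem_insert_self _ _
    rw [sigmaT, if_pos hnm, hSP1, hσ, Finset.erase_insert hAt]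

lemma vchain_singleton_sylow [Fact p.Prime] (hp : p.Prime) (Q : Sylow p G) :
    vchain p ({((Q : Subgroup G) : Set G)} : Finset (Set G)) =
      (Fintype.card G).factorization p := by
  have hbQ : cbot ({((Q : Subgroup G) : Set G)} : Finset (Set G)) =
      ((Q : Subgroup G) : Set G) := by
    rw [cbot, Finset.inf_singleton]; rfl
  rw [vchain, hbQ, ← Nat.card_coe_set_eq, SetLike.coe_sort_coe, Q.card_eq_multiplicity,
    Nat.card_eq_fintype_card, hp.factorization_pow, Finsupp.single_eq_same]

lemma singleton_sylow_mem_SubChains [Fact p.Prime] (Q : Sylow p G) :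
    ({((Q : Subgroup G) : Set G)} : Finset (Set G)) ∈ SubChains p G := by
  refine mem_SubChains.2 ⟨⟨_, Finset.mem_singleton_self _⟩, ?_, ?_⟩
  · rw [Finset.coe_singleton]
    exact Set.pairwise_singleton _ _
  · intro S hS
    rw [Finset.mem_singleton] at hS
    exact ⟨(Q : Subgroup G), Q.isPGroup', hS⟩

end BrownInvolution

/-- If `G` is not `p`-closed and `p^d = min { |P : P ∩ Q| : P ≠ Q Sylow p-subgroups }`, then
`χ_p(G) = χ(C_p(G))/|G|_{p'} ≡ 1 (mod p^d)`. -/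
theorem euler_char_pCosets_div_ordCompl_modEq_one_pow {G : Type*} [Group G] [Fintype G]
    {p : ℕ} (hp : p.Prime)
    (hnc : ¬ ∃ P : Sylow p G, (P : Subgroup G).Normal)
    (d : ℕ)
    (hd : p ^ d = sInf {n : ℕ | ∃ P Q : Sylow p G, P ≠ Q ∧
      n = ((P : Subgroup G) ⊓ (Q : Subgroup G)).relIndex (P : Subgroup G)}) :
    ∃ χp : ℤ,
      posetEulerChar ↥(pCosets p G) = ((ordCompl[p] (Fintype.card G) : ℕ) : ℤ) * χp ∧
      χp ≡ 1 [ZMOD (p : ℤ) ^ d] := by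
  classical
  haveI hFact : Fact p.Prime := ⟨hp⟩
  have hmin : ∀ P Q : Sylow p G, P ≠ Q →
      p ^ d ≤ ((P : Subgroup G) ⊓ (Q : Subgroup G)).relIndex (P : Subgroup G) := by
    intro P Q h
    rw [hd]
    exact Nat.sInf_le ⟨P, Q, h, rfl⟩
  have sylow_le_eq : ∀ {P Q : Sylow p G}, (P : Subgroup G) ≤ (Q : Subgroup G) → P = Q := by
    intro P Q hle
    refine Sylow.ext (Subgroup.eq_of_le_of_card_ge hle (le_of_eq ?_))
    rw [Q.card_eq_multiplicity, P.card_eq_multiplicity]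
  have hex2 : ∃ P Q : Sylow p G, P ≠ Q := by
    by_contra hno
    push_neg at hno
    obtain ⟨P⟩ : Nonempty (Sylow p G) := inferInstance
    refine hnc ⟨P, ?_⟩
    rw [← Subgroup.normalizer_eq_top_iff, eq_top_iff]
    intro g _
    show g ∈ Subgroup.normalizer (P : Set G)
    rw [← Sylow.smul_eq_iff_mem_normalizer]
    exact hno (g • P) P
  have hd0 : 0 < d := by
    rcases Nat.eq_zero_or_pos d with rfl | h
    · exfalso
      obtain ⟨P, Q, hPQ⟩ := hex2
      have hne : Set.Nonempty {n : ℕ | ∃ P Q : Sylow p G, P ≠ Q ∧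
          n = ((P : Subgroup G) ⊓ (Q : Subgroup G)).relIndex (P : Subgroup G)} :=
        ⟨_, P, Q, hPQ, rfl⟩
      have hmem := Nat.sInf_mem hne
      rw [← hd] at hmem
      obtain ⟨P', Q', hne', hrel⟩ := hmem
      rw [pow_zero] at hrel
      have h1 : (P' : Subgroup G) ≤ (P' : Subgroup G) ⊓ (Q' : Subgroup G) :=
        Subgroup.relIndex_eq_one.1 hrel.symm
      exact hne' (sylow_le_eq (h1.trans inf_le_right))
    · exact h
  set a := (Fintype.card G).factorization p with ha
  set f : Finset (Set G) → ℤ := fun t => (-1 : ℤ) ^ (t.card + 1) * (p : ℤ) ^ (a - vchain p t)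
    with hf
  set Large : Finset (Finset (Set G)) :=
    (SubChains p G).filter (fun t => a - vchain p t < d) with hLarge
  have hsplit1 : chiP p G = (∑ t ∈ Large, f t) +
      ∑ t ∈ (SubChains p G).filter (fun t => ¬ (a - vchain p t < d)), f t := by
    rw [chiP, hLarge]
    exact (Finset.sum_filter_add_sum_filter_not _ _ _).symm
  have hsmall : ((p : ℤ) ^ d) ∣
      ∑ t ∈ (SubChains p G).filter (fun t => ¬ (a - vchain p t < d)), f t := by
    refine Finset.dvd_sum fun t htm => ?_
    obtain ⟨-, hge⟩ := Finset.mem_filter.1 htm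
    have : (p : ℤ) ^ d ∣ (p : ℤ) ^ (a - vchain p t) := pow_dvd_pow _ (by omega)
    exact Dvd.dvd.mul_left this _
  have hsplit2 : (∑ t ∈ Large, f t) =
      (∑ t ∈ Large.filter (fun t => ∃ Q : Sylow p G, t = {((Q : Subgroup G) : Set G)}), f t) +
      ∑ t ∈ Large.filter
        (fun t => ¬ ∃ Q : Sylow p G, t = {((Q : Subgroup G) : Set G)}), f t :=
    (Finset.sum_filter_add_sum_filter_not _ _ _).symm
  have hrest : ∑ t ∈ Large.filter
      (fun t => ¬ ∃ Q : Sylow p G, t = {((Q : Subgroup G) : Set G)}), f t = 0 := by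
    refine Finset.sum_involution (fun t _ => sigmaT p t) ?_ ?_ ?_ ?_
    all_goals
      intro t htm
      obtain ⟨htL, hnot⟩ := Finset.mem_filter.1 htm
      obtain ⟨htS, hlt⟩ := Finset.mem_filter.1 htL
      obtain ⟨hS1, hbot1, hnot1, hne1, hSP1, hcard1⟩ := sigmaT_props hp hmin htS hlt hnot
      try intro h'
    · -- f t + f (sigmaT p t) = 0
      have hveq : vchain p (sigmaT p t) = vchain p t := by rw [vchain, vchain, hbot1]
      rcases hcard1 with ⟨-, hc⟩ | ⟨-, hc⟩
      · rw [hf]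
        simp only
        rw [hveq, hc]
        ring
      · rw [hf]
        simp only
        rw [hveq, hc]
        ring
    · -- nonfixed
      exact hne1
    · -- membership
      have hlt' : a - vchain p (sigmaT p t) < d := by
        rw [vchain, hbot1]; exact hlt
      exact Finset.mem_filter.2 ⟨Finset.mem_filter.2 ⟨hS1, hlt'⟩, hnot1⟩
    · -- involution
      exact sigmaT_sigmaT hp hmin htS hlt hnot
  have hsing : (∑ t ∈ Large.filter
      (fun t => ∃ Q : Sylow p G, t = {((Q : Subgroup G) : Set G)}), f t) =
      (Fintype.card (Sylow p G) : ℤ) := by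
    have himg : Large.filter (fun t => ∃ Q : Sylow p G, t = {((Q : Subgroup G) : Set G)}) =
        Finset.univ.image
          (fun Q : Sylow p G => ({((Q : Subgroup G) : Set G)} : Finset (Set G))) := by
      ext t
      simp only [Finset.mem_filter, Finset.mem_image, Finset.mem_univ, true_and]
      constructor
      · rintro ⟨-, Q, rfl⟩
        exact ⟨Q, rfl⟩
      · rintro ⟨Q, rfl⟩
        refine ⟨Finset.mem_filter.2 ⟨singleton_sylow_mem_SubChains Q, ?_⟩, ⟨Q, rfl⟩⟩
        rw [vchain_singleton_sylow hp Q, ← ha]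
        omega
    rw [himg, Finset.sum_image (fun Q _ Q' _ h =>
      Sylow.ext (SetLike.coe_injective (Finset.singleton_injective h)))]
    have hone : ∀ Q : Sylow p G,
        f ({((Q : Subgroup G) : Set G)} : Finset (Set G)) = 1 := by
      intro Q
      rw [hf]
      simp only
      rw [vchain_singleton_sylow hp Q, ← ha, Finset.card_singleton, Nat.sub_self, pow_zero,
        mul_one]
      norm_num
    rw [Finset.sum_congr rfl fun Q _ => hone Q, Finset.sum_const, Finset.card_univ,
      nsmul_eq_mul, mul_one]
  refine ⟨chiP p G, ?_, ?_⟩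
  · rw [posetEulerChar_eq_sum_cosetChains]
    exact sum_cosetChains hp
  have hkey : ((p : ℤ) ^ d) ∣ chiP p G - (Fintype.card (Sylow p G) : ℤ) := by
    have : chiP p G - (Fintype.card (Sylow p G) : ℤ) =
        ∑ t ∈ (SubChains p G).filter (fun t => ¬ (a - vchain p t < d)), f t := by
      rw [hsplit1, hsplit2, hrest, hsing]
      ring
    rw [this]
    exact hsmall
  have hnp : ((p : ℤ) ^ d) ∣ ((Fintype.card (Sylow p G) : ℤ) - 1) := by
    have h2 : ((p ^ d : ℕ) : ℤ) ∣ ((Fintype.card (Sylow p G) : ℤ) - (1 : ℤ)) :=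
      (card_sylow_modEq_one_pow hp hmin).symm.dvd
    push_cast at h2
    exact h2
  have hsum : ((p : ℤ) ^ d) ∣ (chiP p G - 1) := by
    have h3 := dvd_add hkey hnp
    have h4 : chiP p G - (Fintype.card (Sylow p G) : ℤ) +
        ((Fintype.card (Sylow p G) : ℤ) - 1) = chiP p G - 1 := by ring
    rwa [h4] at h3
  exact (Int.modEq_iff_dvd.2 hsum).symm
end

section
/- Let G be a finite group and X a set of proper subgroups of G, and let C(X) be the poset, ordered by inclusion of subsets of G, of all right cosets Hx with H ∈ X and x ∈ G. Then χ(C(X)) = -Σ_{H ∈ X} μ(H,G)·[G:H], where μ is the Möbius function of the finite poset X ∪ {G} ordered by inclusion. -/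
set_option linter.unusedSectionVars false
set_option maxHeartbeats 1000000

open Finset

open scoped Classical in
lemma posetEulerChar_eq (P : Type*) [PartialOrder P] [Fintype P] :
    posetEulerChar P =
      ∑ s ∈ (Finset.univ : Finset P).powerset.filter
        (fun s : Finset P => s.Nonempty ∧ IsChain (· ≤ ·) (s : Set P)),
      (-1 : ℤ) ^ (s.card + 1) := by
  rw [posetEulerChar]
  rw [Subsingleton.elim (Fintype.ofFinite P) ‹Fintype P›]
  rw [Finset.sum_filter]


section HallMobius
variable {α : Type*} [PartialOrder α] [Fintype α]

open scoped Classical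

/-- A finite nonempty chain has a least element. -/
lemma chain_exists_bot {s : Finset α} (hc : IsChain (· ≤ ·) (s : Set α)) (hne : s.Nonempty) :
    ∃ m ∈ s, ∀ a ∈ s, m ≤ a := by
  obtain ⟨m, hm, hmin⟩ := s.exists_minimal hne
  refine ⟨m, hm, fun a ha => ?_⟩
  rcases eq_or_ne a m with rfl | hne'
  · exact le_rfl
  · rcases hc ha hm hne' with h | h
    · exact absurd (le_antisymm h (hmin ha h)) hne'
    · exact h

lemma chain_exists_top {s : Finset α} (hc : IsChain (· ≤ ·) (s : Set α)) (hne : s.Nonempty) :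
    ∃ m ∈ s, ∀ a ∈ s, a ≤ m := by
  obtain ⟨m, hm, hmax⟩ := s.exists_maximal hne
  refine ⟨m, hm, fun a ha => ?_⟩
  rcases eq_or_ne a m with rfl | hne'
  · exact le_rfl
  · rcases hc ha hm hne' with h | h
    · exact h
    · exact absurd (le_antisymm (hmax ha h) h) hne'

/-- Chain-counting function ν(x,y): sum over chains with least element x and greatest
element y of `(-1)^(card+1)`. -/
noncomputable def nu (x y : α) : ℤ :=
  ∑ s ∈ (univ : Finset α).powerset,
    if IsChain (· ≤ ·) (s : Set α) ∧ x ∈ s ∧ y ∈ s ∧ ∀ a ∈ s, x ≤ a ∧ a ≤ y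
    then (-1 : ℤ) ^ (s.card + 1) else 0

lemma nu_self (x : α) : nu x x = 1 := by
  rw [nu, Finset.sum_eq_single ({x} : Finset α)]
  · simp [Set.subsingleton_singleton.isChain]
  · intro s _ hs
    rw [if_neg]
    rintro ⟨-, hx, -, hall⟩
    exact hs (Finset.eq_singleton_iff_unique_mem.2 ⟨hx, fun a ha => le_antisymm (hall a ha).2 (hall a ha).1⟩)
  · intro h
    exact absurd (Finset.mem_powerset.2 (Finset.subset_univ _)) h

lemma nu_rec (x y : α) (h : x < y) :
    ∑ z ∈ univ.filter (fun z => x ≤ z ∧ z ≤ y), nu x z = 0 := by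
  have key : ∀ s ∈ (univ : Finset α).powerset,
      (∑ z ∈ univ.filter (fun z => x ≤ z ∧ z ≤ y),
        if IsChain (· ≤ ·) (s : Set α) ∧ x ∈ s ∧ z ∈ s ∧ ∀ a ∈ s, x ≤ a ∧ a ≤ z
        then (-1 : ℤ) ^ (s.card + 1) else 0) =
      (if IsChain (· ≤ ·) (s : Set α) ∧ x ∈ s ∧ ∀ a ∈ s, x ≤ a ∧ a ≤ y
        then (-1 : ℤ) ^ (s.card + 1) else 0) := by
    intro s _
    by_cases hs : IsChain (· ≤ ·) (s : Set α) ∧ x ∈ s ∧ ∀ a ∈ s, x ≤ a ∧ a ≤ y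
    · rw [if_pos hs]
      obtain ⟨hc, hx, hall⟩ := hs
      obtain ⟨m, hm, hmax⟩ := chain_exists_top hc ⟨x, hx⟩
      rw [Finset.sum_eq_single m]
      · rw [if_pos ⟨hc, hx, hm, fun a ha => ⟨(hall a ha).1, hmax a ha⟩⟩]
      · intro z _ hz
        rw [if_neg]
        rintro ⟨-, -, hzs, hall'⟩
        exact hz (le_antisymm (hmax z hzs) (hall' m hm).2)
      · intro hm'
        exact absurd (Finset.mem_filter.2 ⟨Finset.mem_univ _, (hall m hm).1, (hall m hm).2⟩) hm'
    · rw [if_neg hs, Finset.sum_eq_zero]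
      intro z hz
      rw [if_neg]
      rintro ⟨hc, hx, hzs, hall⟩
      rw [Finset.mem_filter] at hz
      exact hs ⟨hc, hx, fun a ha => ⟨(hall a ha).1, le_trans (hall a ha).2 hz.2.2⟩⟩
  calc ∑ z ∈ univ.filter (fun z => x ≤ z ∧ z ≤ y), nu x z
      = ∑ s ∈ (univ : Finset α).powerset,
          ∑ z ∈ univ.filter (fun z => x ≤ z ∧ z ≤ y),
          (if IsChain (· ≤ ·) (s : Set α) ∧ x ∈ s ∧ z ∈ s ∧ ∀ a ∈ s, x ≤ a ∧ a ≤ z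
            then (-1 : ℤ) ^ (s.card + 1) else 0) := by
        simp only [nu]; exact Finset.sum_comm
    _ = ∑ s ∈ (univ : Finset α).powerset,
          (if IsChain (· ≤ ·) (s : Set α) ∧ x ∈ s ∧ ∀ a ∈ s, x ≤ a ∧ a ≤ y
            then (-1 : ℤ) ^ (s.card + 1) else 0) := Finset.sum_congr rfl key
    _ = ∑ s ∈ (univ : Finset α).powerset.filter
          (fun s : Finset α => IsChain (· ≤ ·) (s : Set α) ∧ x ∈ s ∧ ∀ a ∈ s, x ≤ a ∧ a ≤ y),
          (-1 : ℤ) ^ (s.card + 1) := (Finset.sum_filter _ _).symm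
    _ = 0 := ?_
  refine Finset.sum_involution (fun s _ => if y ∈ s then s.erase y else insert y s) ?_ ?_ ?_ ?_
  · -- sums to zero
    intro s hs
    simp only [Finset.mem_filter] at hs
    by_cases hy : y ∈ s
    · simp only [hy, if_true]
      rw [Finset.card_erase_of_mem hy]
      have : (-1 : ℤ) ^ (s.card - 1 + 1) = (-1) ^ s.card := by
        congr 1
        have : s.card ≠ 0 := Finset.card_ne_zero_of_mem hy
        omega
      rw [this, pow_succ]
      ring
    · simp only [hy, if_false]
      rw [Finset.card_insert_of_notMem hy, pow_succ]
      ring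
  · -- g s ≠ s
    intro s hs _
    by_cases hy : y ∈ s
    · simp only [hy, if_true]
      intro hss
      exact (Finset.erase_eq_self.1 hss) hy
    · simp only [hy, if_false]
      intro hss
      exact hy (hss ▸ Finset.mem_insert_self y s)
  · -- g s ∈ filtered set
    intro s hs
    simp only [Finset.mem_filter] at hs ⊢
    obtain ⟨-, hc, hx, hall⟩ := hs
    by_cases hy : y ∈ s
    · simp only [hy, if_true]
      refine ⟨Finset.mem_powerset.2 (Finset.subset_univ _), ?_, ?_, ?_⟩
      · exact hc.mono (by rw [Finset.coe_erase]; exact Set.diff_subset)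
      · exact Finset.mem_erase.2 ⟨h.ne, hx⟩
      · intro a ha; exact hall a (Finset.mem_of_mem_erase ha)
    · simp only [hy, if_false]
      refine ⟨Finset.mem_powerset.2 (Finset.subset_univ _), ?_, Finset.mem_insert_of_mem hx, ?_⟩
      · rw [Finset.coe_insert]
        apply hc.insert
        intro b hb _
        exact Or.inr (hall b hb).2
      · intro a ha
        rcases Finset.mem_insert.1 ha with rfl | ha
        · exact ⟨h.le, le_rfl⟩
        · exact ⟨(hall a ha).1, (hall a ha).2⟩
  · -- involution
    intro s hs
    by_cases hy : y ∈ s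
    · simp only [hy, if_true, Finset.notMem_erase, if_false]
      exact Finset.insert_erase hy
    · simp only [hy, if_false, Finset.mem_insert_self, if_true]
      exact Finset.erase_insert hy

lemma mobius_eq_nu {μ : α → α → ℤ} (hμ : IsMobiusOf μ) :
    ∀ (n : ℕ) (x y : α), (univ.filter (fun z => x ≤ z ∧ z ≤ y)).card ≤ n → x ≤ y →
      μ x y = nu x y := by
  intro n
  induction n with
  | zero =>
    intro x y hcard hxy
    have : 0 < (univ.filter (fun z => x ≤ z ∧ z ≤ y)).card :=
      Finset.card_pos.2 ⟨x, Finset.mem_filter.2 ⟨Finset.mem_univ x, le_rfl, hxy⟩⟩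
    omega
  | succ n ih =>
    intro x y hcard hxy
    rcases eq_or_lt_of_le hxy with rfl | hlt
    · rw [hμ.1, nu_self]
    set I := univ.filter (fun z => x ≤ z ∧ z ≤ y) with hI
    have hy : y ∈ I := by simp [hI, hxy]
    have hIcc : Set.Icc x y = ↑I := by ext z; simp [hI, Set.mem_Icc]
    have hrecμ : μ x y + ∑ z ∈ I.erase y, μ x z = 0 := by
      have := hμ.2 x y hlt
      rw [hIcc, finsum_mem_coe_finset, ← Finset.add_sum_erase _ _ hy] at this
      exact this
    have hrecν : nu x y + ∑ z ∈ I.erase y, nu x z = 0 := by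
      have := nu_rec x y hlt
      rw [← hI, ← Finset.add_sum_erase _ _ hy] at this
      exact this
    have hsame : ∑ z ∈ I.erase y, μ x z = ∑ z ∈ I.erase y, nu x z := by
      refine Finset.sum_congr rfl fun z hz => ?_
      obtain ⟨hzy, hzI⟩ := Finset.mem_erase.1 hz
      rw [hI, Finset.mem_filter] at hzI
      refine ih x z ?_ hzI.2.1
      have hsub : univ.filter (fun w => x ≤ w ∧ w ≤ z) ⊆ I.erase y := by
        intro w hw
        rw [Finset.mem_filter] at hw
        refine Finset.mem_erase.2 ⟨?_, ?_⟩
        · rintro rfl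
          exact hzy (le_antisymm hzI.2.2 hw.2.2)
        · rw [hI, Finset.mem_filter]
          exact ⟨Finset.mem_univ _, hw.2.1, le_trans hw.2.2 hzI.2.2⟩
      have := Finset.card_le_card hsub
      have := Finset.card_erase_of_mem hy
      have : (I.erase y).card < I.card := Finset.card_erase_lt_of_mem hy
      omega
    omega
end HallMobius

section Cosets
variable {G : Type*} [Group G] [Fintype G]
open scoped Pointwise Classical

lemma mem_coset {H : Subgroup G} {x a : G} :
    a ∈ (H : Set G) * ({x} : Set G) ↔ a * x⁻¹ ∈ H := by
  rw [Set.mem_mul]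
  constructor
  · rintro ⟨h, hh, x', hx', rfl⟩
    rw [Set.mem_singleton_iff] at hx'
    subst hx'
    simpa using hh
  · intro ha
    exact ⟨a * x⁻¹, ha, x, rfl, by group⟩

lemma image_eq_coset (H : Subgroup G) (x : G) :
    (fun h => h * x) '' (H : Set G) = (H : Set G) * {x} :=
  (Set.mul_singleton).symm

lemma self_mem_coset (H : Subgroup G) (x : G) : x ∈ (H : Set G) * {x} :=
  mem_coset.2 (by simp [H.one_mem])

lemma stab_coset (H : Subgroup G) (x : G) :
    MulAction.stabilizer G ((H : Set G) * {x}) = H := by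
  ext g
  rw [MulAction.mem_stabilizer_iff]
  constructor
  · intro hg
    have : g * x ∈ (H : Set G) * {x} := by
      rw [← hg]
      simpa [smul_eq_mul] using Set.smul_mem_smul_set (a := g) (self_mem_coset H x)
    simpa using mem_coset.1 this
  · intro hg
    ext a
    rw [Set.mem_smul_set_iff_inv_smul_mem, smul_eq_mul, mem_coset, mem_coset, mul_assoc,
      H.mul_mem_cancel_left (H.inv_mem hg)]

lemma subgroup_mul_subgroup {H K : Subgroup G} (hHK : H ≤ K) :
    (K : Set G) * (H : Set G) = (K : Set G) := by
  ext a
  rw [Set.mem_mul]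
  constructor
  · rintro ⟨k, hk, h, hh, rfl⟩
    exact K.mul_mem hk (hHK hh)
  · intro ha
    exact ⟨a, ha, 1, H.one_mem, mul_one a⟩

lemma subgroup_mul_coset {H K : Subgroup G} (hHK : H ≤ K) (x : G) :
    (K : Set G) * ((H : Set G) * {x}) = (K : Set G) * {x} := by
  rw [← mul_assoc, subgroup_mul_subgroup hHK]

lemma card_rc (H : Subgroup G) :
    ((univ : Finset G).image (fun x => (H : Set G) * {x})).card = H.index := by
  have wd : ∀ a b : G, QuotientGroup.leftRel H a b →
      (H : Set G) * {a⁻¹} = (H : Set G) * {b⁻¹} := by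
    intro a b hab
    rw [QuotientGroup.leftRel_apply] at hab
    ext c
    rw [mem_coset, mem_coset, inv_inv, inv_inv,
      show c * b = c * a * (a⁻¹ * b) by group, H.mul_mem_cancel_right hab]
  set φ : G ⧸ H → Set G := fun q => Quotient.liftOn' q (fun x => (H : Set G) * {x⁻¹}) wd with hφ
  rw [show H.index = Nat.card (G ⧸ H) from Subgroup.index_eq_card H, Nat.card_eq_fintype_card,
    ← Finset.card_univ]
  refine (Finset.card_bij (fun q _ => φ q) ?_ ?_ ?_).symm
  · intro q _
    induction q using Quotient.inductionOn' with
    | h x => exact Finset.mem_image.2 ⟨x⁻¹, Finset.mem_univ _, by simp [hφ, Quotient.liftOn'_mk'']⟩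
  · intro q _ q' _ hqq
    induction q using Quotient.inductionOn' with
    | h x =>
    induction q' using Quotient.inductionOn' with
    | h y =>
    simp only [hφ, Quotient.liftOn'_mk''] at hqq
    have : x⁻¹ ∈ (H : Set G) * {y⁻¹} := hqq ▸ self_mem_coset H x⁻¹
    rw [mem_coset, inv_inv] at this
    exact Quotient.sound' (QuotientGroup.leftRel_apply.2 this)
  · intro S hS
    obtain ⟨x, -, rfl⟩ := Finset.mem_image.1 hS
    exact ⟨Quotient.mk'' x⁻¹, Finset.mem_univ _, by simp [hφ, Quotient.liftOn'_mk'']⟩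

lemma coset_mono {H K : Subgroup G} (hHK : H ≤ K) (x : G) :
    (H : Set G) * {x} ⊆ (K : Set G) * {x} := by
  intro a ha
  rw [mem_coset] at ha ⊢
  exact hHK ha

lemma coset_form {H : Subgroup G} {x a : G} (ha : a ∈ (H : Set G) * {x}) :
    (H : Set G) * {x} = (H : Set G) * {a} := by
  rw [mem_coset] at ha
  ext b
  rw [mem_coset, mem_coset]
  constructor
  · intro hb
    have h2 := H.mul_mem hb (H.inv_mem ha)
    have key : b * a⁻¹ = b * x⁻¹ * (a * x⁻¹)⁻¹ := by group
    rw [key]; exact h2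
  · intro hb
    have := H.mul_mem hb ha
    simpa [show b * a⁻¹ * (a * x⁻¹) = b * x⁻¹ by group] using this

lemma coset_subset_le {H K : Subgroup G} {x y : G}
    (h : (H : Set G) * {x} ⊆ (K : Set G) * {y}) : H ≤ K := by
  have hx : x * y⁻¹ ∈ K := mem_coset.1 (h (self_mem_coset H x))
  intro g hg
  have : g * x ∈ (K : Set G) * {y} := h (mem_coset.2 (by simpa using hg))
  rw [mem_coset] at this
  have h2 := K.mul_mem this (K.inv_mem hx)
  have key : g = g * x * y⁻¹ * (x * y⁻¹)⁻¹ := by group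
  rw [key]; exact h2

lemma coset_subset_eq {H K : Subgroup G} {x y : G}
    (h : (H : Set G) * {x} ⊆ (K : Set G) * {y}) :
    (K : Set G) * {y} = (K : Set G) * {x} :=
  coset_form (h (self_mem_coset H x))

end Cosets

section InfLemma
variable {α β : Type*} [SemilatticeInf β] [OrderTop β]

lemma inf_eq_of_least [DecidableEq α] {t : Finset α} {m : α} (f : α → β) (hm : m ∈ t)
    (hleast : ∀ a ∈ t, f m ≤ f a) : t.inf f = f m :=
  le_antisymm (Finset.inf_le hm) (Finset.le_inf hleast)

end InfLemma

section Main
variable {G : Type*} [Group G] [Fintype G]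

open scoped Pointwise Classical

/-- The poset `X ∪ {⊤}`. -/
abbrev QT (X : Set (Subgroup G)) : Type _ := {H : Subgroup G // H ∈ X ∨ H = ⊤}

/-- The coset poset. -/
abbrev CP (X : Set (Subgroup G)) : Type _ :=
  ↥{S : Set G | ∃ H ∈ X, ∃ x : G, S = (fun h => h * x) '' (H : Set G)}

variable (X : Set (Subgroup G))

/-- Finset of right cosets of `K`. -/
noncomputable def RCF (K : Subgroup G) : Finset (Set G) :=
  (univ : Finset G).image (fun x => (K : Set G) * {x})

lemma RCF_card (K : Subgroup G) : (RCF K).card = K.index := card_rc K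

/-- Chains in `X` (viewed inside `QT X`). -/
noncomputable def Tfin [Fintype (QT X)] : Finset (Finset (QT X)) :=
  univ.filter (fun t => t.Nonempty ∧ IsChain (· ≤ ·) (↑t : Set (QT X)) ∧ ∀ a ∈ t, a.val ∈ X)

lemma mem_Tfin [Fintype (QT X)] {t : Finset (QT X)} :
    t ∈ Tfin X ↔ t.Nonempty ∧ IsChain (· ≤ ·) (↑t : Set (QT X)) ∧ ∀ a ∈ t, a.val ∈ X := by
  simp [Tfin]

lemma mem_CP (S : CP X) : ∃ H ∈ X, ∃ x : G, S.val = (H : Set G) * {x} := by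
  obtain ⟨H, hH, x, hS⟩ := S.2
  exact ⟨H, hH, x, by rw [hS, image_eq_coset]⟩

lemma stab_mem (S : CP X) : MulAction.stabilizer G S.val ∈ X := by
  obtain ⟨H, hH, x, hS⟩ := mem_CP X S
  rw [hS, stab_coset]
  exact hH

/-- The subgroup of which a coset `S` is a coset, as element of `QT X`. -/
noncomputable def subOfQ (S : CP X) : QT X :=
  ⟨MulAction.stabilizer G S.val, Or.inl (stab_mem X S)⟩

lemma val_nonempty (S : CP X) : S.val.Nonempty := by
  obtain ⟨H, hH, x, hS⟩ := mem_CP X S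
  exact ⟨x, hS ▸ self_mem_coset H x⟩

lemma canon (S : CP X) {a : G} (ha : a ∈ S.val) :
    S.val = ((subOfQ X S).val : Set G) * {a} := by
  obtain ⟨H, hH, x, hS⟩ := mem_CP X S
  have hst : MulAction.stabilizer G S.val = H := by rw [hS, stab_coset]
  show S.val = ((MulAction.stabilizer G S.val : Subgroup G) : Set G) * {a}
  rw [hst, hS]
  exact coset_form (hS ▸ ha)

lemma subOf_mono {S S' : CP X} (h : S.val ⊆ S'.val) :
    (subOfQ X S).val ≤ (subOfQ X S').val := by
  obtain ⟨a, ha⟩ := val_nonempty X S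
  have ha' : a ∈ S'.val := h ha
  have e1 := canon X S ha
  have e2 := canon X S' ha'
  refine coset_subset_le (x := a) (y := a) ?_
  rw [← e1, ← e2]
  exact h

lemma subOf_inj {S S' : CP X} (h : S.val ⊆ S'.val) (he : subOfQ X S = subOfQ X S') :
    S = S' := by
  obtain ⟨a, ha⟩ := val_nonempty X S
  have ha' : a ∈ S'.val := h ha
  apply Subtype.ext
  rw [canon X S ha, canon X S' ha', he]

lemma cp_le {S S' : CP X} : S ≤ S' ↔ S.val ⊆ S'.val := Iff.rfl

lemma qt_le {a b : QT X} : a ≤ b ↔ a.val ≤ b.val := Iff.rfl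

lemma aux3 [Fintype (QT X)] (f : Finset (QT X) → ℤ) :
    ∑ t ∈ Tfin X, f t =
      ∑ H ∈ (univ : Finset (QT X)),
        ∑ t ∈ (Tfin X).filter (fun t => H ∈ t ∧ ∀ a ∈ t, H ≤ a), f t := by
  have key : ∀ t ∈ Tfin X,
      (∑ H ∈ (univ : Finset (QT X)), if H ∈ t ∧ ∀ a ∈ t, H ≤ a then f t else 0) = f t := by
    intro t ht
    obtain ⟨hne, hc, -⟩ := (mem_Tfin X).1 ht
    obtain ⟨m, hm, hleast⟩ := chain_exists_bot hc hne
    rw [Finset.sum_eq_single m]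
    · rw [if_pos ⟨hm, hleast⟩]
    · intro H _ hHm
      rw [if_neg]
      rintro ⟨hH, hle⟩
      exact hHm (le_antisymm (hle m hm) (hleast H hH))
    · intro hm'; exact absurd (Finset.mem_univ m) hm'
  conv_lhs => rw [← Finset.sum_congr rfl key]
  rw [Finset.sum_comm]
  refine Finset.sum_congr rfl fun H _ => ?_
  rw [Finset.sum_filter]

lemma aux2 [Fintype (QT X)] (hX : ∀ H ∈ X, H ≠ ⊤) (H : QT X) (hH : H.val ∈ X) :
    ∑ t ∈ (Tfin X).filter (fun t => H ∈ t ∧ ∀ a ∈ t, H ≤ a), (-1 : ℤ) ^ (t.card + 1)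
      = - nu H (⟨⊤, Or.inr rfl⟩ : QT X) := by
  set T := (⟨⊤, Or.inr rfl⟩ : QT X) with hT
  have hHT : H ≠ T := by
    intro h
    exact hX H.val hH (by rw [h])
  have hmemT : ∀ a : QT X, a ≠ T → a.val ∈ X := by
    intro a haT
    rcases a.2 with h | h
    · exact h
    · exact absurd (Subtype.ext h) haT
  have haleT : ∀ a : QT X, a ≤ T := fun a => qt_le X |>.2 le_top
  have hnu : nu H T = ∑ s ∈ (univ : Finset (QT X)).powerset.filter
      (fun s : Finset (QT X) => IsChain (· ≤ ·) (↑s : Set (QT X)) ∧ H ∈ s ∧ T ∈ s ∧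
        ∀ a ∈ s, H ≤ a ∧ a ≤ T), (-1 : ℤ) ^ (s.card + 1) := by
    rw [nu, Finset.sum_filter]
    refine Finset.sum_congr rfl fun s _ => ?_
    split_ifs with h1 h2 h2 <;> first | rfl | exact absurd h1 h2 | exact absurd h2 h1
  rw [hnu, ← Finset.sum_neg_distrib]
  refine Finset.sum_nbij' (fun t => insert T t) (fun s => s.erase T) ?_ ?_ ?_ ?_ ?_
  · -- maps into nu index set
    intro t ht
    simp only [Finset.mem_filter] at ht ⊢
    obtain ⟨ht', hHt, hle⟩ := ht
    obtain ⟨-, hc, hXt⟩ := (mem_Tfin X).1 ht'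
    refine ⟨Finset.mem_powerset.2 (Finset.subset_univ _), ?_, Finset.mem_insert_of_mem hHt,
      Finset.mem_insert_self _ _, ?_⟩
    · rw [Finset.coe_insert]
      exact hc.insert (fun b _ _ => Or.inr (haleT b))
    · intro a ha
      rcases Finset.mem_insert.1 ha with rfl | ha
      · exact ⟨haleT H, le_rfl⟩
      · exact ⟨hle a ha, haleT a⟩
  · -- reverse map
    intro s hs
    simp only [Finset.mem_filter] at hs ⊢
    obtain ⟨-, hc, hHs, hTs, hbound⟩ := hs
    refine ⟨(mem_Tfin X).2 ⟨⟨H, Finset.mem_erase.2 ⟨hHT, hHs⟩⟩, ?_, ?_⟩, 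
      Finset.mem_erase.2 ⟨hHT, hHs⟩, fun a ha => (hbound a (Finset.mem_of_mem_erase ha)).1⟩
    · exact hc.mono (by rw [Finset.coe_erase]; exact Set.diff_subset)
    · intro a ha
      exact hmemT a (Finset.mem_erase.1 ha).1
  · -- left inverse
    intro t ht
    simp only [Finset.mem_filter] at ht
    have hTt : T ∉ t := by
      intro hTt
      exact hX ⊤ ((mem_Tfin X).1 ht.1 |>.2.2 T hTt) rfl
    exact Finset.erase_insert hTt
  · -- right inverse
    intro s hs
    simp only [Finset.mem_filter] at hs
    exact Finset.insert_erase hs.2.2.2.1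
  · -- values
    intro t ht
    simp only [Finset.mem_filter] at ht
    have hTt : T ∉ t := by
      intro hTt
      exact hX ⊤ ((mem_Tfin X).1 ht.1 |>.2.2 T hTt) rfl
    rw [Finset.card_insert_of_notMem hTt]
    ring

lemma key_elem {s : Finset (CP X)} (hc : IsChain (· ≤ ·) (↑s : Set (CP X))) (hne : s.Nonempty) :
    ∃ m ∈ s, (∀ S ∈ s, m ≤ S) ∧ s.inf (fun S => S.val) = m.val ∧
      ((s.image (subOfQ X)).inf (fun a : QT X => a.val)) = (subOfQ X m).val := by
  obtain ⟨m, hm, hleast⟩ := chain_exists_bot hc hne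
  refine ⟨m, hm, hleast, inf_eq_of_least _ hm (fun S hS => hleast S hS), ?_⟩
  rw [Finset.inf_image]
  exact inf_eq_of_least _ hm (fun S hS => subOf_mono X (hleast S hS))

lemma elem_decomp {s : Finset (CP X)} {m : CP X} (hm : m ∈ s) (hleast : ∀ S ∈ s, m ≤ S)
    {S : CP X} (hS : S ∈ s) :
    ((subOfQ X S).val : Set G) * (s.inf (fun S => S.val)) = S.val := by
  have hinf : s.inf (fun S => S.val) = m.val := inf_eq_of_least _ hm hleast
  obtain ⟨a, ha⟩ := val_nonempty X m
  have haS : a ∈ S.val := hleast S hS ha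
  rw [hinf, canon X m ha, subgroup_mul_coset (subOf_mono X (hleast S hS)), ← canon X S haS]

open scoped Classical in
lemma aux1 [Fintype (QT X)] :
    posetEulerChar (CP X) =
      ∑ t ∈ Tfin X, (-1 : ℤ) ^ (t.card + 1) * ((t.inf (fun a : QT X => a.val)).index : ℤ) := by
  letI : Fintype (CP X) := Fintype.ofFinite _
  rw [posetEulerChar_eq]
  have hW : (∑ t ∈ Tfin X, (-1 : ℤ) ^ (t.card + 1) * ((t.inf (fun a : QT X => a.val)).index : ℤ))
      = ∑ w ∈ (Tfin X).sigma (fun t => RCF (t.inf (fun a : QT X => a.val))),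
          (-1 : ℤ) ^ (w.1.card + 1) := by
    rw [Finset.sum_sigma]
    refine Finset.sum_congr rfl fun t _ => ?_
    have hfst : ∀ s : Set G, ((⟨t, s⟩ : Σ _ : Finset (QT X), Set G).fst.card) = t.card :=
      fun _ => rfl
    simp only [hfst]
    rw [Finset.sum_const, RCF_card, nsmul_eq_mul, mul_comm]
  rw [hW]
  have jmem : ∀ w : Σ _ : Finset (QT X), Set G,
      w ∈ (Tfin X).sigma (fun t => RCF (t.inf (fun a : QT X => a.val))) →
      ∀ K : QT X, K ∈ w.1 →
      ((K.val : Set G) * w.2) ∈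
        {S : Set G | ∃ H ∈ X, ∃ x : G, S = (fun h => h * x) '' (H : Set G)} := by
    intro w hw K hK
    rw [Finset.mem_sigma] at hw
    obtain ⟨x, -, hx⟩ := Finset.mem_image.1 hw.2
    obtain ⟨-, -, hXt⟩ := (mem_Tfin X).1 hw.1
    refine ⟨K.val, hXt K hK, x, ?_⟩
    rw [image_eq_coset, ← hx]
    exact subgroup_mul_coset (Finset.inf_le hK) x
  refine Finset.sum_bij'
    (fun (s : Finset (CP X)) (_ : s ∈ _) =>
      (⟨s.image (subOfQ X), s.inf (fun S => S.val)⟩ : Σ _ : Finset (QT X), Set G))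
    (fun w hw => w.1.attach.image (fun K => (⟨(K.1.val : Set G) * w.2, jmem w hw K.1 K.2⟩ : CP X)))
    ?_ ?_ ?_ ?_ ?_
  · -- hi : image is in the sigma set
    intro s hs
    rw [Finset.mem_filter] at hs
    obtain ⟨-, hne, hc⟩ := hs
    obtain ⟨m, hm, hleast, hinf, hinfQ⟩ := key_elem X hc hne
    rw [Finset.mem_sigma]
    constructor
    · refine (mem_Tfin X).2 ⟨hne.image _, ?_, ?_⟩
      · intro a ha b hb hab
        obtain ⟨S, hS, rfl⟩ := Finset.mem_coe.1 ha |> Finset.mem_image.1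
        obtain ⟨S', hS', rfl⟩ := Finset.mem_coe.1 hb |> Finset.mem_image.1
        have hSS : S ≠ S' := fun h => hab (by rw [h])
        rcases hc hS hS' hSS with h | h
        · exact Or.inl (subOf_mono X h)
        · exact Or.inr (subOf_mono X h)
      · intro a ha
        obtain ⟨S, -, rfl⟩ := Finset.mem_image.1 ha
        exact stab_mem X S
    · show s.inf (fun S => S.val) ∈ RCF ((s.image (subOfQ X)).inf fun a : QT X => a.val)
      rw [hinfQ, hinf]
      obtain ⟨a, ha⟩ := val_nonempty X m
      exact Finset.mem_image.2 ⟨a, Finset.mem_univ _, (canon X m ha).symm⟩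
  · -- hj : reverse image is in filtered powerset
    intro w hw
    have hw' := Finset.mem_sigma.1 hw
    obtain ⟨hne, hct, hXt⟩ := (mem_Tfin X).1 hw'.1
    rw [Finset.mem_filter]
    refine ⟨Finset.mem_powerset.2 (Finset.subset_univ _), ?_, ?_⟩
    · obtain ⟨K, hK⟩ := hne
      exact ⟨_, Finset.mem_image_of_mem _ (Finset.mem_attach _ ⟨K, hK⟩)⟩
    · intro a ha b hb hab
      obtain ⟨K, -, rfl⟩ := Finset.mem_coe.1 ha |> Finset.mem_image.1
      obtain ⟨K', -, rfl⟩ := Finset.mem_coe.1 hb |> Finset.mem_image.1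
      have hKK : K.1 ≠ K'.1 := by
        intro h
        apply hab
        apply Subtype.ext
        show (K.1.val : Set G) * w.2 = (K'.1.val : Set G) * w.2
        rw [h]
      rcases hct K.2 K'.2 (fun h => hKK (by rw [h])) with h | h
      · exact Or.inl (Set.mul_subset_mul_right (SetLike.coe_subset_coe.2 h))
      · exact Or.inr (Set.mul_subset_mul_right (SetLike.coe_subset_coe.2 h))
  · -- left inverse
    intro s hs
    rw [Finset.mem_filter] at hs
    obtain ⟨-, hne, hc⟩ := hs
    obtain ⟨m, hm, hleast⟩ := chain_exists_bot hc hne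
    ext V
    simp only [Finset.mem_image]
    constructor
    · rintro ⟨K, -, rfl⟩
      obtain ⟨S, hS, hKS⟩ := Finset.mem_image.1 K.2
      have hval : ((K.1.val : Set G) * s.inf (fun S => S.val)) = S.val := by
        rw [← hKS]
        exact elem_decomp X hm hleast hS
      have hveq : ∀ pf, (⟨(K.1.val : Set G) * s.inf (fun S => S.val), pf⟩ : CP X) = S :=
        fun _ => Subtype.ext hval
      rw [hveq]
      exact hS
    · intro hV
      refine ⟨⟨subOfQ X V, Finset.mem_image_of_mem _ hV⟩, Finset.mem_attach _ _, ?_⟩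
      exact Subtype.ext (elem_decomp X hm hleast hV)
  · -- right inverse
    intro w hw
    obtain ⟨t, c⟩ := w
    have ht : t ∈ Tfin X := (Finset.mem_sigma.1 hw).1
    have hcm : c ∈ RCF (t.inf fun a : QT X => a.val) := (Finset.mem_sigma.1 hw).2
    obtain ⟨hne, hct, hXt⟩ := (mem_Tfin X).1 ht
    obtain ⟨x, -, hx0⟩ := Finset.mem_image.1 hcm
    have hx : ((t.inf fun a : QT X => a.val : Subgroup G) : Set G) * {x} = c := hx0
    obtain ⟨m₀, hm₀, hleast₀⟩ := chain_exists_bot hct hne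
    have hinf₀ : t.inf (fun a : QT X => a.val) = m₀.val :=
      inf_eq_of_least _ hm₀ (fun a ha => hleast₀ a ha)
    have hcoset : ∀ K : QT X, K ∈ t → (K.val : Set G) * c = (K.val : Set G) * {x} := by
      intro K hK
      rw [← hx]
      exact subgroup_mul_coset (Finset.inf_le hK) x
    have h1 : (t.attach.image (fun K => (⟨(K.1.val : Set G) * c,
        jmem ⟨t, c⟩ hw K.1 K.2⟩ : CP X))).image (subOfQ X) = t := by
      rw [Finset.image_image]
      have heq : Set.EqOn ((subOfQ X) ∘ (fun K : {a // a ∈ t} => (⟨(K.1.val : Set G) * c,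
          jmem ⟨t, c⟩ hw K.1 K.2⟩ : CP X))) (fun K => K.1) (↑t.attach) := by
        intro K _
        apply Subtype.ext
        show MulAction.stabilizer G ((K.1.val : Set G) * c) = K.1.val
        rw [hcoset K.1 K.2, stab_coset]
      rw [Finset.image_congr heq, Finset.attach_image_val]
    have h2 : (t.attach.image (fun K => (⟨(K.1.val : Set G) * c,
        jmem ⟨t, c⟩ hw K.1 K.2⟩ : CP X))).inf (fun S => S.val) = c := by
      rw [Finset.inf_image]
      have : t.attach.inf ((fun (S : CP X) => S.val) ∘ (fun K : {a // a ∈ t} =>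
          (⟨(K.1.val : Set G) * c, jmem ⟨t, c⟩ hw K.1 K.2⟩ : CP X)))
          = (m₀.val : Set G) * c := by
        refine inf_eq_of_least _ (Finset.mem_attach _ ⟨m₀, hm₀⟩) ?_
        intro K _
        show (m₀.val : Set G) * c ⊆ (K.1.val : Set G) * c
        exact Set.mul_subset_mul_right (SetLike.coe_subset_coe.2 (hleast₀ K.1 K.2))
      rw [this, ← hx, hinf₀]
      exact subgroup_mul_coset le_rfl x
    exact Sigma.ext h1 (heq_of_eq h2)
  · -- values
    intro s hs
    rw [Finset.mem_filter] at hs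
    obtain ⟨-, hne, hc⟩ := hs
    have hcard : (s.image (subOfQ X)).card = s.card := by
      rw [Finset.card_image_of_injOn]
      intro S hS S' hS' he
      rcases eq_or_ne S S' with h | h
      · exact h
      · rcases hc hS hS' h with hle | hle
        · exact subOf_inj X hle he
        · exact (subOf_inj X hle he.symm).symm
    rw [hcard]

end Main


/-- Let `X` be a set of proper subgroups of `G` and `C(X)` the poset of all right cosets `Hx`
with `H ∈ X`, ordered by inclusion. Then `χ(C(X)) = -Σ_{H ∈ X} μ(H,G)·[G:H]`, where `μ` is the
Möbius function of the poset `X ∪ {G}` ordered by inclusion. -/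
theorem euler_char_cosets_eq_neg_sum_mobius {G : Type*} [Group G] [Fintype G]
    (X : Set (Subgroup G)) (hX : ∀ H ∈ X, H ≠ ⊤)
    (μ : {H : Subgroup G // H ∈ X ∨ H = ⊤} → {H : Subgroup G // H ∈ X ∨ H = ⊤} → ℤ)
    (hμ : IsMobiusOf μ) :
    posetEulerChar
        ↥{S : Set G | ∃ H ∈ X, ∃ x : G, S = (fun h => h * x) '' (H : Set G)} =
      -∑ᶠ (H : {H : Subgroup G // H ∈ X ∨ H = ⊤}) (_ : H.val ∈ X),
        μ H ⟨⊤, Or.inr rfl⟩ * (H.val.index : ℤ) := by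
  classical
  letI : Finite (Subgroup G) := Finite.of_injective _ SetLike.coe_injective
  letI : Fintype (QT X) := Fintype.ofFinite _
  set T : QT X := ⟨⊤, Or.inr rfl⟩ with hT
  set F : Finset (QT X) := univ.filter (fun H : QT X => H.val ∈ X) with hF
  have hset : {H : QT X | H.val ∈ X} = (F : Set (QT X)) := by
    ext H
    simp [hF]
  have hfin : (∑ᶠ (H : QT X) (_ : H.val ∈ X), μ H T * (H.val.index : ℤ))
      = ∑ H ∈ F, μ H T * (H.val.index : ℤ) := by
    calc (∑ᶠ (H : QT X) (_ : H.val ∈ X), μ H T * (H.val.index : ℤ))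
        = ∑ᶠ H ∈ (F : Set (QT X)), μ H T * (H.val.index : ℤ) := by rw [← hset]; rfl
      _ = _ := finsum_mem_coe_finset _ _
  have hmob : ∀ H ∈ F, μ H T = nu H T := by
    intro H hH
    exact mobius_eq_nu hμ _ H T le_rfl ((qt_le X).2 le_top)
  rw [aux1 X, hfin,
    aux3 X (fun t => (-1 : ℤ) ^ (t.card + 1) * ((t.inf (fun a : QT X => a.val)).index : ℤ))]
  have hvanish : ∀ H ∈ (univ : Finset (QT X)), H ∉ F →
      (∑ t ∈ (Tfin X).filter (fun t => H ∈ t ∧ ∀ a ∈ t, H ≤ a),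
        (-1 : ℤ) ^ (t.card + 1) * ((t.inf (fun a : QT X => a.val)).index : ℤ)) = 0 := by
    intro H _ hHF
    have hHX : H.val ∉ X := by simpa [hF] using hHF
    refine Finset.sum_eq_zero fun t ht => ?_
    rw [Finset.mem_filter] at ht
    exact absurd ((mem_Tfin X).1 ht.1 |>.2.2 H ht.2.1) hHX
  rw [← Finset.sum_subset (Finset.subset_univ F) hvanish, ← Finset.sum_neg_distrib]
  refine Finset.sum_congr rfl fun H hH => ?_
  have hHX : H.val ∈ X := by simpa [hF] using hH
  have hinner : ∀ t ∈ (Tfin X).filter (fun t => H ∈ t ∧ ∀ a ∈ t, H ≤ a),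
      (-1 : ℤ) ^ (t.card + 1) * ((t.inf (fun a : QT X => a.val)).index : ℤ)
        = (-1 : ℤ) ^ (t.card + 1) * (H.val.index : ℤ) := by
    intro t ht
    rw [Finset.mem_filter] at ht
    rw [inf_eq_of_least _ ht.2.1 (fun a ha => ht.2.2 a ha)]
  rw [Finset.sum_congr rfl hinner, ← Finset.sum_mul, aux2 X hX H hHX, ← hT, hmob H hH]
  ring
end
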